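/- (Monotone Maximum) Let N ≥ 1 and 1 ≤ K ≤ N, with profits r_i ∈ (0,1] for i ∈ [N]. Let D be a convex set of functions ℝ → ℝ containing the CDF F(S,u) for every assortment S ⊆ [N] with |S| ≤ K and every u ∈ [0,1]^N, and let U be a functional that is quasiconvex on D. Let v, v' ∈ [0,1]^N with v'_i ≥ v_i for all i ∈ [N]. Let S* be an assortment of minimum cardinality among all S ⊆ [N] with |S| ≤ K maximizing U(F(S,v)). Then max_{S ⊆ [N], |S| ≤ K} U(F(S,v')) ≥ U(F(S*,v)). -/

import Mathlib

/-- The CDF of the purchase-profit distribution of the MNL model with assortment `S`,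
profits `r` and preference vector `v`. -/
noncomputable def mnlCDF {ι : Type*} (S : Finset ι) (r v : ι → ℝ) (x : ℝ) : ℝ :=
  if x < 0 then 0
  else (1 + ∑ i ∈ S.filter (fun i => r i ≤ x), v i) / (1 + ∑ i ∈ S, v i)

/-- **Lemma (Monotone Maximum).**
If `U` is quasiconvex on a convex set `D` containing all the MNL CDFs, `v' ≥ v`
coordinatewise, and `S*` is a minimum-cardinality optimal assortment for `v` under the
cardinality constraint `K`, then the optimal value for `v'` is at least `U(F(S*,v))`. -/
lemma mnl_alg1 (A C t s : ℝ) (hC : 0 ≤ C) (ht : 0 ≤ t) (hs : 0 < s) :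
    (1 + (t + A)) / (1 + (t + C))
      = (1 + C) * (s - t) / (s * ((1 + C) + t)) * ((1 + A) / (1 + C))
        + (1 - (1 + C) * (s - t) / (s * ((1 + C) + t))) * ((1 + (s + A)) / (1 + (s + C))) := by
  have h1 : (1:ℝ) + (t + C) ≠ 0 := by nlinarith
  have h2 : (1:ℝ) + C ≠ 0 := by nlinarith
  have h3 : (1:ℝ) + (s + C) ≠ 0 := by nlinarith
  have h4 : s * ((1 + C) + t) ≠ 0 := by positivity
  field_simp
  ring

lemma mnl_alg2 (A C t s : ℝ) (hC : 0 ≤ C) (ht : 0 ≤ t) (hs : 0 < s) :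
    (1 + A) / (1 + (t + C))
      = (1 + C) * (s - t) / (s * ((1 + C) + t)) * ((1 + A) / (1 + C))
        + (1 - (1 + C) * (s - t) / (s * ((1 + C) + t))) * ((1 + A) / (1 + (s + C))) := by
  have h1 : (1:ℝ) + (t + C) ≠ 0 := by nlinarith
  have h2 : (1:ℝ) + C ≠ 0 := by nlinarith
  have h3 : (1:ℝ) + (s + C) ≠ 0 := by nlinarith
  have h4 : s * ((1 + C) + t) ≠ 0 := by positivity
  field_simp
  ring

lemma mnlCDF_congr {ι : Type*} (S : Finset ι) (r u w : ι → ℝ)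
    (h : ∀ j ∈ S, u j = w j) : mnlCDF S r u = mnlCDF S r w := by
  funext x
  unfold mnlCDF
  split
  · rfl
  · congr 1
    · congr 1
      exact Finset.sum_congr rfl fun j hj => h j (Finset.mem_filter.mp hj).1
    · congr 1
      exact Finset.sum_congr rfl h

lemma mnlCDF_convex {ι : Type*} [DecidableEq ι] (S : Finset ι) (r u : ι → ℝ) (i : ι)
    (hi : i ∈ S) (hu : ∀ j ∈ S, 0 ≤ u j) (s : ℝ) (hts : u i ≤ s) :
    ∃ l : ℝ, 0 ≤ l ∧ l ≤ 1 ∧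
      mnlCDF S r u = l • mnlCDF (S.erase i) r u
        + (1 - l) • mnlCDF S r (Function.update u i s) := by
  rcases eq_or_lt_of_le hts with heq | hlt
  · refine ⟨0, le_refl _, zero_le_one, ?_⟩
    rw [← heq, Function.update_eq_self]
    funext x; simp
  · have ht0 : 0 ≤ u i := hu i hi
    have hs0 : 0 < s := lt_of_le_of_lt ht0 hlt
    have hC0 : 0 ≤ ∑ j ∈ S.erase i, u j :=
      Finset.sum_nonneg fun j hj => hu j (Finset.mem_of_mem_erase hj)
    refine ⟨(1 + ∑ j ∈ S.erase i, u j) * (s - u i)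
        / (s * ((1 + ∑ j ∈ S.erase i, u j) + u i)), ?_, ?_, ?_⟩
    · apply div_nonneg
      · nlinarith
      · nlinarith
    · rw [div_le_one (by nlinarith)]
      nlinarith
    · funext x
      simp only [Pi.add_apply, Pi.smul_apply, smul_eq_mul, mnlCDF]
      by_cases hx : x < 0
      · simp [hx]
      · simp only [if_neg hx]
        have hsumS : ∑ j ∈ S, u j = u i + ∑ j ∈ S.erase i, u j :=
          (Finset.add_sum_erase S u hi).symm
        have hsumS' : ∑ j ∈ S, Function.update u i s j
            = s + ∑ j ∈ S.erase i, u j := by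
          rw [← Finset.add_sum_erase S _ hi, Function.update_self]
          congr 1
          exact Finset.sum_congr rfl fun j hj =>
            Function.update_of_ne (Finset.ne_of_mem_erase hj) _ _
        have hfe : (S.filter (fun j => r j ≤ x)).erase i
            = (S.erase i).filter (fun j => r j ≤ x) := by
          rw [Finset.filter_erase]
        by_cases hrx : r i ≤ x
        · have hifl : i ∈ S.filter (fun j => r j ≤ x) := Finset.mem_filter.mpr ⟨hi, hrx⟩
          have hA : ∑ j ∈ S.filter (fun j => r j ≤ x), u j
              = u i + ∑ j ∈ (S.erase i).filter (fun j => r j ≤ x), u j := by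
            rw [← hfe, ← Finset.add_sum_erase _ u hifl]
          have hA' : ∑ j ∈ S.filter (fun j => r j ≤ x), Function.update u i s j
              = s + ∑ j ∈ (S.erase i).filter (fun j => r j ≤ x), u j := by
            rw [← hfe, ← Finset.add_sum_erase _ _ hifl, Function.update_self]
            congr 1
            exact Finset.sum_congr rfl fun j hj =>
              Function.update_of_ne (Finset.ne_of_mem_erase hj) _ _
          rw [hsumS, hsumS', hA, hA']
          exact mnl_alg1 _ _ _ _ hC0 ht0 hs0
        · have hnot : i ∉ S.filter (fun j => r j ≤ x) := by
            simp [Finset.mem_filter, hrx]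
          have hA : S.filter (fun j => r j ≤ x)
              = (S.erase i).filter (fun j => r j ≤ x) := by
            rw [← hfe, Finset.erase_eq_of_notMem hnot]
          have hA' : ∑ j ∈ S.filter (fun j => r j ≤ x), Function.update u i s j
              = ∑ j ∈ (S.erase i).filter (fun j => r j ≤ x), u j := by
            rw [hA]
            exact Finset.sum_congr rfl fun j hj =>
              Function.update_of_ne (Finset.ne_of_mem_erase (Finset.mem_filter.mp hj).1) _ _
          rw [hsumS, hsumS', hA', hA]
          exact mnl_alg2 _ _ _ _ hC0 ht0 hs0


theorem monotone_maximum (N K : ℕ) (hN : 1 ≤ N) (hK1 : 1 ≤ K) (hKN : K ≤ N)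
    (r : Fin N → ℝ) (hr : ∀ i, 0 < r i ∧ r i ≤ 1)
    (Dset : Set (ℝ → ℝ)) (hDconv : Convex ℝ Dset)
    (hDF : ∀ S : Finset (Fin N), S.card ≤ K → ∀ u : Fin N → ℝ,
      (∀ i, 0 ≤ u i ∧ u i ≤ 1) → mnlCDF S r u ∈ Dset)
    (U : (ℝ → ℝ) → ℝ)
    (hU : ∀ F G : ℝ → ℝ, F ∈ Dset → G ∈ Dset → ∀ l : ℝ, 0 ≤ l → l ≤ 1 →
      U (l • F + (1 - l) • G) ≤ max (U F) (U G))
    (v v' : Fin N → ℝ) (hv : ∀ i, 0 ≤ v i ∧ v i ≤ 1) (hv' : ∀ i, 0 ≤ v' i ∧ v' i ≤ 1)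
    (hvv' : ∀ i, v i ≤ v' i)
    (Sstar : Finset (Fin N)) (hScard : Sstar.card ≤ K)
    (hSmax : ∀ S : Finset (Fin N), S.card ≤ K → U (mnlCDF S r v) ≤ U (mnlCDF Sstar r v))
    (hSmin : ∀ S : Finset (Fin N), S.card ≤ K →
      (∀ S' : Finset (Fin N), S'.card ≤ K → U (mnlCDF S' r v) ≤ U (mnlCDF S r v)) →
      Sstar.card ≤ S.card) :
    ∃ S : Finset (Fin N), S.card ≤ K ∧ U (mnlCDF Sstar r v) ≤ U (mnlCDF S r v') := by
  classical
  -- auxiliary: for any T, there is a good assortment for the partially-raised vector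
  have main : ∀ T : Finset (Fin N), ∃ S : Finset (Fin N), S.card ≤ K ∧
      U (mnlCDF Sstar r v) ≤ U (mnlCDF S r (fun j => if j ∈ T then v' j else v j)) := by
    intro T
    induction T using Finset.induction_on with
    | empty =>
        refine ⟨Sstar, hScard, ?_⟩
        simp
    | insert i T hiT ih =>
        obtain ⟨S₀, hS₀K, hS₀⟩ := ih
        set w : Fin N → ℝ := fun j => if j ∈ T then v' j else v j with hw
        have hwb : ∀ j, 0 ≤ w j ∧ w j ≤ 1 := by
          intro j
          by_cases hj : j ∈ T <;> simp [hw, hj, hv j, hv' j]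
        have hw' : (fun j => if j ∈ insert i T then v' j else v j)
            = Function.update w i (v' i) := by
          funext j
          by_cases hji : j = i
          · subst hji; simp [Function.update_self]
          · rw [Function.update_of_ne hji]
            simp [hw, Finset.mem_insert, hji]
        rw [hw']
        by_cases hiS : i ∈ S₀
        · -- decompose
          obtain ⟨l, hl0, hl1, hdec⟩ := mnlCDF_convex S₀ r w i hiS
            (fun j _ => (hwb j).1) (v' i) (by simp [hw, hiT, hvv' i])
          have hwub : ∀ j, 0 ≤ Function.update w i (v' i) j ∧
              Function.update w i (v' i) j ≤ 1 := by
            intro j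
            by_cases hji : j = i
            · subst hji; simp [Function.update_self, hv' j]
            · rw [Function.update_of_ne hji]; exact hwb j
          have hmemF : mnlCDF (S₀.erase i) r w ∈ Dset :=
            hDF _ (le_trans (Finset.card_le_card (Finset.erase_subset _ _)) hS₀K) _ hwb
          have hmemG : mnlCDF S₀ r (Function.update w i (v' i)) ∈ Dset :=
            hDF _ hS₀K _ hwub
          have hle : U (mnlCDF S₀ r w) ≤
              max (U (mnlCDF (S₀.erase i) r w)) (U (mnlCDF S₀ r (Function.update w i (v' i)))) := by
            rw [hdec]
            exact hU _ _ hmemF hmemG l hl0 hl1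
          rcases le_max_iff.mp hle with hcase | hcase
          · refine ⟨S₀.erase i, le_trans (Finset.card_le_card (Finset.erase_subset _ _)) hS₀K, ?_⟩
            have : mnlCDF (S₀.erase i) r w
                = mnlCDF (S₀.erase i) r (Function.update w i (v' i)) := by
              apply mnlCDF_congr
              intro j hj
              exact (Function.update_of_ne (Finset.ne_of_mem_erase hj) _ _).symm
            rw [← this]
            exact le_trans hS₀ hcase
          · exact ⟨S₀, hS₀K, le_trans hS₀ hcase⟩
        · refine ⟨S₀, hS₀K, ?_⟩
          have : mnlCDF S₀ r w = mnlCDF S₀ r (Function.update w i (v' i)) := by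
            apply mnlCDF_congr
            intro j hj
            exact (Function.update_of_ne (fun h : j = i => hiS (h ▸ hj)) _ _).symm
          rw [← this]
          exact hS₀
  obtain ⟨S, hSK, hS⟩ := main Finset.univ
  refine ⟨S, hSK, ?_⟩
  simpa using hS
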